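/- arXiv:1406.1377 — 3 statements merged into one kernel-verified Lean document; each statement's English description precedes it below -/
import Mathlib

section
/- Under the hypotheses C_V, C_L > 0, γ_V, γ_L > 1, π_L > 0, p* > 0, T* > 0, and (q_V − q_L)/T* > C_L γ_L, the saturation-curve slope T_sat′(p*) = T* · (C_V(γ_V−1)/p* − C_L(γ_L−1)/(p*+π_L)) / (C_Vγ_V − C_Lγ_L + (q_V−q_L)/T*) satisfies T_sat′(p*) < (T*/p*)·(γ_V−1)/γ_V. -/
/-- Under the stated parameter hypotheses, the saturation-curve slope
T_sat′(p*) is strictly less than (T*/p*)·(γ_V−1)/γ_V. -/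
theorem saturation_slope_lt_shock_slope
    (γV γL CV CL πL pstar Tstar qV qL : ℝ)
    (hCV : 0 < CV) (hCL : 0 < CL) (hγV : 1 < γV) (hγL : 1 < γL)
    (hπL : 0 < πL) (hp : 0 < pstar) (hT : 0 < Tstar)
    (hq : CL * γL < (qV - qL) / Tstar) :
    Tstar * ((CV * (γV - 1) / pstar - CL * (γL - 1) / (pstar + πL)) /
        (CV * γV - CL * γL + (qV - qL) / Tstar))
      < Tstar / pstar * ((γV - 1) / γV) := by
  set q := (qV - qL) / Tstar with hqdef
  have hD : CV * γV < CV * γV - CL * γL + q := by linarith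
  have hD0 : (0:ℝ) < CV * γV := by positivity
  have hD1 : (0:ℝ) < CV * γV - CL * γL + q := lt_trans hD0 hD
  have hA : (0:ℝ) < CV * (γV - 1) / pstar := by
    have : (0:ℝ) < γV - 1 := by linarith
    positivity
  have hN : CV * (γV - 1) / pstar - CL * (γL - 1) / (pstar + πL)
      < CV * (γV - 1) / pstar := by
    have : (0:ℝ) < CL * (γL - 1) / (pstar + πL) := by
      have : (0:ℝ) < γL - 1 := by linarith
      positivity
    linarith
  have step1 : (CV * (γV - 1) / pstar - CL * (γL - 1) / (pstar + πL)) /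
      (CV * γV - CL * γL + q)
      < (CV * (γV - 1) / pstar) / (CV * γV) := by
    calc (CV * (γV - 1) / pstar - CL * (γL - 1) / (pstar + πL)) /
        (CV * γV - CL * γL + q)
        < (CV * (γV - 1) / pstar) / (CV * γV - CL * γL + q) := by
          exact (div_lt_div_iff_of_pos_right hD1).mpr hN
      _ < (CV * (γV - 1) / pstar) / (CV * γV) :=
          div_lt_div_of_pos_left hA hD0 hD
  have heq : (CV * (γV - 1) / pstar) / (CV * γV) = 1 / pstar * ((γV - 1) / γV) := by
    field_simp
  have := mul_lt_mul_of_pos_left step1 hT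
  calc Tstar * ((CV * (γV - 1) / pstar - CL * (γL - 1) / (pstar + πL)) /
        (CV * γV - CL * γL + q))
      < Tstar * ((CV * (γV - 1) / pstar) / (CV * γV)) := this
    _ = Tstar / pstar * ((γV - 1) / γV) := by rw [heq]; field_simp
end

section
/- Theorem (no condensation by compression, stiffened gas): Assume the parameter conditions C_V, C_L > 0, γ_V, γ_L > 1, π_L > 0, and for the intersection point (p*, T*) with p*, T* > 0 assume (q_V − q_L)/T* − C_Lγ_L > 0. Then the shock wave curve T̂(p̂) = T*·(p̂/p*)·(p*(γ_V+1)+p̂(γ_V−1))/(p̂(γ_V+1)+p*(γ_V−1)) satisfies T̂′(p*) > T_sat′(p*), where T_sat′(p*) = T*·(C_V(γ_V−1)/p* − C_L(γ_L−1)/(p*+π_L))/(C_Vγ_V − C_Lγ_L + (q_V−q_L)/T*). Hence the necessary intersection condition T̂′(p*) ≤ T_sat′(p*) fails. -/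
/-- no condensation by compression, stiffened gas: under the stated
parameter hypotheses, the derivative at p* of the shock wave curve
T̂(p̂) = T*·(p̂/p*)·(p*(γ_V+1)+p̂(γ_V−1))/(p̂(γ_V+1)+p*(γ_V−1))
is strictly greater than the saturation slope T_sat′(p*); hence the necessary
intersection condition T̂′(p*) ≤ T_sat′(p*) fails. -/
theorem no_condensation_by_compression
    (γV γL CV CL πL pstar Tstar qV qL : ℝ)
    (hCV : 0 < CV) (hCL : 0 < CL) (hγV : 1 < γV) (hγL : 1 < γL)
    (hπL : 0 < πL) (hp : 0 < pstar) (hT : 0 < Tstar)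
    (hq : 0 < (qV - qL) / Tstar - CL * γL) :
    deriv
        (fun phat : ℝ =>
          Tstar * (phat / pstar) *
            ((pstar * (γV + 1) + phat * (γV - 1)) /
              (phat * (γV + 1) + pstar * (γV - 1)))) pstar
      > Tstar * ((CV * (γV - 1) / pstar - CL * (γL - 1) / (pstar + πL)) /
          (CV * γV - CL * γL + (qV - qL) / Tstar)) := by
  have hγV0 : 0 < γV := lt_trans one_pos hγV
  have hDne : pstar * (γV + 1) + pstar * (γV - 1) ≠ 0 := by nlinarith
  have h1 : HasDerivAt (fun p : ℝ => Tstar * (p / pstar)) (Tstar * (1 / pstar)) pstar :=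
    ((hasDerivAt_id pstar).div_const pstar).const_mul Tstar
  have hN : HasDerivAt (fun p : ℝ => pstar * (γV + 1) + p * (γV - 1)) (γV - 1) pstar := by
    simpa using ((hasDerivAt_id pstar).mul_const (γV - 1)).const_add (pstar * (γV + 1))
  have hD : HasDerivAt (fun p : ℝ => p * (γV + 1) + pstar * (γV - 1)) (γV + 1) pstar := by
    simpa using ((hasDerivAt_id pstar).mul_const (γV + 1)).add_const (pstar * (γV - 1))
  have hdiv := hN.div hD hDne
  have hmul : HasDerivAt (fun phat : ℝ => Tstar * (phat / pstar) * ((pstar * (γV + 1) + phat * (γV - 1)) / (phat * (γV + 1) + pstar * (γV - 1)))) (Tstar * (1 / pstar) * ((pstar * (γV + 1) + pstar * (γV - 1)) / (pstar * (γV + 1) + pstar * (γV - 1))) + Tstar * (pstar / pstar) * (((γV - 1) * (pstar * (γV + 1) + pstar * (γV - 1)) - (pstar * (γV + 1) + pstar * (γV - 1)) * (γV + 1)) / (pstar * (γV + 1) + pstar * (γV - 1)) ^ 2)) pstar := h1.mul hdiv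
  rw [hmul.deriv]
  have hDpos : 0 < CV * γV - CL * γL + (qV - qL) / Tstar := by nlinarith
  have hpπ : 0 < pstar + πL := by linarith
  rw [gt_iff_lt, ← mul_div_assoc, div_lt_iff₀ hDpos]
  have hval : Tstar * (1 / pstar) *
        ((pstar * (γV + 1) + pstar * (γV - 1)) / (pstar * (γV + 1) + pstar * (γV - 1))) +
      Tstar * (pstar / pstar) *
        (((γV - 1) * (pstar * (γV + 1) + pstar * (γV - 1)) -
            (pstar * (γV + 1) + pstar * (γV - 1)) * (γV + 1)) /
          (pstar * (γV + 1) + pstar * (γV - 1)) ^ 2)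
      = Tstar * (γV - 1) / (pstar * γV) := by
    field_simp [hγV0.ne', hp.ne']
    ring
  rw [hval]
  rw [div_mul_eq_mul_div, lt_div_iff₀ (by positivity : (0:ℝ) < pstar * γV)]
  have key : Tstar * (CV * (γV - 1) / pstar - CL * (γL - 1) / (pstar + πL)) * (pstar * γV)
      < Tstar * (γV - 1) * (CV * γV - CL * γL + (qV - qL) / Tstar) := by
    have hγL1 : 0 < γL - 1 := by linarith
    have e1 : Tstar * (CV * (γV - 1) / pstar - CL * (γL - 1) / (pstar + πL)) * (pstar * γV)
        = Tstar * (γV - 1) * (CV * γV) - Tstar * (CL * (γL - 1)) * (pstar * γV) / (pstar + πL) := by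
      field_simp
    rw [e1]
    have h2 : 0 < Tstar * (CL * (γL - 1)) * (pstar * γV) / (pstar + πL) := div_pos (mul_pos (mul_pos hT (mul_pos hCL hγL1)) (mul_pos hp hγV0)) hpπ
    have h3 : 0 < Tstar * (γV - 1) * ((qV - qL) / Tstar - CL * γL) := by
      have : 0 < Tstar * (γV - 1) := by nlinarith
      exact mul_pos this hq
    nlinarith
  linarith [key]
end

section
/- Theorem (no strong cavitation, stiffened gas): Under the same parameter hypotheses (C_V, C_L > 0, γ_V, γ_L > 1, π_L > 0, p*, T* > 0, (q_V − q_L)/T* − C_Lγ_L > 0), the isentropic wave curve T̂(p) = T*(p/p*)^((γ_V−1)/γ_V) satisfies T̂′(p*) > T_sat′(p*), so a rarefaction wave curve cannot cross the saturation line from the vapor side in the required direction. -/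
/-- no strong cavitation, stiffened gas: under the same parameter
hypotheses, the derivative at p* of the isentropic wave curve
T̂(p) = T*(p/p*)^((γ_V−1)/γ_V) is strictly greater than the saturation slope
T_sat′(p*). -/
theorem no_strong_cavitation
    (γV γL CV CL πL pstar Tstar qV qL : ℝ)
    (hCV : 0 < CV) (hCL : 0 < CL) (hγV : 1 < γV) (hγL : 1 < γL)
    (hπL : 0 < πL) (hp : 0 < pstar) (hT : 0 < Tstar)
    (hq : 0 < (qV - qL) / Tstar - CL * γL) :
    deriv (fun p : ℝ => Tstar * (p / pstar) ^ ((γV - 1) / γV)) pstar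
      > Tstar * ((CV * (γV - 1) / pstar - CL * (γL - 1) / (pstar + πL)) /
          (CV * γV - CL * γL + (qV - qL) / Tstar)) := by
  set α : ℝ := (γV - 1) / γV with hαdef
  have hγV0 : (0:ℝ) < γV := by linarith
  have hα : 0 < α := div_pos (by linarith) hγV0
  have h1 : HasDerivAt (fun p : ℝ => p / pstar) (1 / pstar) pstar :=
    (hasDerivAt_id pstar).div_const pstar
  have h3 : HasDerivAt (fun p : ℝ => Tstar * (p / pstar) ^ α)
      (Tstar * (1 / pstar * α * (pstar / pstar) ^ (α - 1))) pstar :=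
    (h1.rpow_const (Or.inl (by positivity))).const_mul Tstar
  rw [h3.deriv]
  have hps : pstar / pstar = 1 := div_self (ne_of_gt hp)
  rw [hps, Real.one_rpow, mul_one, mul_comm (1 / pstar) α]
  -- now goal: Tstar * (α * (1/pstar)) > Tstar * (A / D)
  have hD : 0 < CV * γV - CL * γL + (qV - qL) / Tstar := by
    nlinarith [mul_pos hCV hγV0]
  rw [gt_iff_lt]
  apply mul_lt_mul_of_pos_left _ hT
  rw [div_lt_iff₀ hD]
  have hc : 0 < α * (1 / pstar) := mul_pos hα (by positivity)
  have key : CV * (γV - 1) / pstar = α * (1 / pstar) * (CV * γV) := by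
    field_simp [hαdef]
    rw [hαdef, mul_div_assoc', mul_div_cancel_left₀ _ (ne_of_gt hγV0)]
  have hpos : 0 < CL * (γL - 1) / (pstar + πL) := div_pos (mul_pos hCL (by linarith)) (by linarith)
  have h4 : CV * γV < CV * γV - CL * γL + (qV - qL) / Tstar := by linarith
  calc CV * (γV - 1) / pstar - CL * (γL - 1) / (pstar + πL)
      < CV * (γV - 1) / pstar := by linarith
    _ = α * (1 / pstar) * (CV * γV) := key
    _ < α * (1 / pstar) * (CV * γV - CL * γL + (qV - qL) / Tstar) :=
        (mul_lt_mul_iff_right₀ hc).mpr h4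
end
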